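/- Let n ≥ 2 be an integer, i ≥ 1 an integer with b := log^{[i]} n ≥ 2, and set r_i = b / (16 · log₂ b). Let n_i be a real with 0 < n_i ≤ n, let j be an integer with 0 ≤ j ≤ r_i − 1, and set n_{i+1} = n_i / b^{4j+2}. Then the interval [n/n_{i+1}, (n/n_{i+1})·b^{1/4}] is contained in the interval [n/n_i, (n/n_i)·(log^{[i-1]} n)^{1/4}] (as intervals of real numbers). -/

import Mathlib

/-- Iterated binary logarithm: `iterLog 0 x = x`, `iterLog (k+1) x = log₂ (iterLog k x)`. -/
noncomputable def iterLog : ℕ → ℝ → ℝ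
  | 0, x => x
  | k + 1, x => Real.logb 2 (iterLog k x)

/-- `logStar n` is the least `k` with `log^{[k]} n < 2`. -/
noncomputable def logStar (n : ℕ) : ℕ := sInf {k : ℕ | iterLog k (n : ℝ) < 2}

theorem stmt10 (n : ℕ) (hn : 2 ≤ n) (i : ℕ) (hi : 1 ≤ i)
    (hb : 2 ≤ iterLog i n)
    (ni : ℝ) (hni : 0 < ni) (hni' : ni ≤ n)
    (j : ℕ)
    (hj : (j : ℝ) ≤ iterLog i n / (16 * Real.logb 2 (iterLog i n)) - 1) :
    Set.Icc ((n : ℝ) / (ni / iterLog i n ^ (4 * (j : ℝ) + 2)))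
        ((n : ℝ) / (ni / iterLog i n ^ (4 * (j : ℝ) + 2)) * iterLog i n ^ ((1 : ℝ) / 4)) ⊆
      Set.Icc ((n : ℝ) / ni) ((n : ℝ) / ni * iterLog (i - 1) n ^ ((1 : ℝ) / 4)) := by
  obtain ⟨k, rfl⟩ : ∃ k, i = k + 1 := ⟨i - 1, by omega⟩
  simp only [Nat.add_sub_cancel]
  set L := iterLog k (n : ℝ) with hLdef
  set b := iterLog (k + 1) (n : ℝ) with hbdef
  have hbL : b = Real.logb 2 L := rfl
  set lb := Real.logb 2 b with hlbdef
  have hb2 : (2 : ℝ) ≤ b := hb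
  have hb1 : (1 : ℝ) < b := by linarith
  have hb0 : (0 : ℝ) < b := by linarith
  have hlb1 : (1 : ℝ) ≤ lb := by
    have h1 : Real.logb 2 2 ≤ Real.logb 2 b :=
      Real.logb_le_logb_of_le (by norm_num) (by norm_num) hb2
    rwa [Real.logb_self_eq_one (by norm_num)] at h1
  have hLne : L ≠ 0 := by
    intro h
    rw [hbL, h] at hb2
    simp at hb2
    linarith
  have habs : (2 : ℝ) ^ b = |L| := by
    rw [hbL]
    exact Real.rpow_logb_eq_abs (by norm_num) (by norm_num) hLne
  have hblb : (2 : ℝ) ^ lb = b := Real.rpow_logb (by norm_num) (by norm_num) hb0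
  set p : ℝ := 4 * (j : ℝ) + 2 with hpdef
  -- the key exponent inequality
  have key : b ^ p * b ^ ((1 : ℝ) / 4) ≤ (2 : ℝ) ^ (b / 4 - 1 / 2) := by
    have e1 : b ^ p * b ^ ((1 : ℝ) / 4) = (2 : ℝ) ^ (lb * (p + 1 / 4)) := by
      rw [← Real.rpow_add hb0, ← hblb, ← Real.rpow_mul (by norm_num)]
    rw [e1]
    apply (Real.rpow_le_rpow_left_iff (by norm_num : (1 : ℝ) < 2)).mpr
    have hj' : (j : ℝ) + 1 ≤ b / (16 * lb) := by linarith
    have h16 : (0 : ℝ) < 16 * lb := by linarith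
    have h2 := (le_div_iff₀ h16).mp hj'
    have hj0 : (0 : ℝ) ≤ (j : ℝ) := Nat.cast_nonneg j
    nlinarith [mul_nonneg hj0 (by linarith : (0:ℝ) ≤ lb)]
  -- lower bound on L ^ (1/4)
  have hfin : (2 : ℝ) ^ (b / 4 - 1 / 2) ≤ L ^ ((1 : ℝ) / 4) := by
    have habs4 : |L| ^ ((1 : ℝ) / 4) = (2 : ℝ) ^ (b / 4) := by
      rw [← habs, ← Real.rpow_mul (by norm_num), mul_one_div]
    rcases hLne.lt_or_gt with hL | hL
    · -- L < 0
      have hcos : Real.cos ((1 : ℝ) / 4 * Real.pi) = Real.sqrt 2 / 2 := by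
        rw [show (1 : ℝ) / 4 * Real.pi = Real.pi / 4 by ring, Real.cos_pi_div_four]
      have hlog : Real.log L = Real.log |L| := by
        rw [abs_of_neg hL, Real.log_neg_eq_log]
      have hLr : L ^ ((1 : ℝ) / 4) = |L| ^ ((1 : ℝ) / 4) * (Real.sqrt 2 / 2) := by
        rw [Real.rpow_def_of_neg hL, hcos, hlog,
          Real.rpow_def_of_pos (abs_pos.mpr hLne), mul_comm (Real.log |L|)]
      have hsqrt : Real.sqrt 2 / 2 = (2 : ℝ) ^ (-(1 / 2) : ℝ) := by
        have h2 : Real.sqrt 2 * Real.sqrt 2 = 2 := Real.mul_self_sqrt (by norm_num)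
        have hs0 : (0 : ℝ) < Real.sqrt 2 := Real.sqrt_pos.mpr (by norm_num)
        rw [Real.rpow_neg (by norm_num), ← Real.sqrt_eq_rpow]
        field_simp
        nlinarith [h2]
      rw [hLr, habs4, hsqrt, ← Real.rpow_add (by norm_num)]
      apply le_of_eq
      ring_nf
    · -- 0 < L
      have : |L| = L := abs_of_pos hL
      rw [this] at habs4
      rw [habs4]
      apply Real.rpow_le_rpow_left_iff (by norm_num : (1 : ℝ) < 2) |>.mpr
      linarith
  have hp1 : (1 : ℝ) ≤ b ^ p := Real.one_le_rpow hb1.le (by positivity)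
  have hbp0 : (0 : ℝ) < b ^ p := Real.rpow_pos_of_pos hb0 p
  apply Set.Icc_subset_Icc
  · -- lower endpoint
    have hd : 0 < ni / b ^ p := by positivity
    have hd2 : ni / b ^ p ≤ ni := div_le_self hni.le hp1
    gcongr
  · -- upper endpoint
    rw [div_div_eq_mul_div]
    have e2 : (n : ℝ) * b ^ p / ni * b ^ ((1 : ℝ) / 4)
        = (n : ℝ) / ni * (b ^ p * b ^ ((1 : ℝ) / 4)) := by ring
    rw [e2]
    exact mul_le_mul_of_nonneg_left (key.trans hfin) (by positivity)
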